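/- Selector-variable soundness: let ψ = ∃s Q̂.(φ ∧ ⋀_{C∈F}(C ∪ {s})) be a closed prenex formula where the fresh existential variable s occurs only positively (in the clauses of frame F) and is in the leftmost block. Then ψ[s↦false] is satisfiability-equivalent to Q̂.(φ ∧ ⋀_{C∈F} C), and ψ[s↦true] is satisfiability-equivalent to Q̂.φ. -/

import Mathlib

/-- Variables are natural numbers. -/
abbrev Var := Nat

/-- A literal: a variable with a polarity (`pos = true` means positive). -/
structure Lit where
  var : Var
  pos : Bool
deriving DecidableEq, Repr

abbrev Clause := List Lit
abbrev Cube := List Lit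
abbrev CNF := List Clause

abbrev Assignment := Var → Bool

def Lit.eval (α : Assignment) (l : Lit) : Bool :=
  if l.pos then α l.var else !(α l.var)

def Clause.eval (α : Assignment) (C : Clause) : Bool := C.any (Lit.eval α)

def Cube.evalCube (α : Assignment) (C : Cube) : Bool := C.all (Lit.eval α)

def CNF.eval (α : Assignment) (φ : CNF) : Bool := φ.all (Clause.eval α)

/-- A flat quantifier prefix: list of (quantifier, variable); `true` = ∃, `false` = ∀. -/
abbrev QPrefix := List (Bool × Var)

/-- Recursive semantics of closed prenex QBFs, relative to an ambient assignment `α`. -/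
def QSat (α : Assignment) : QPrefix → (Assignment → Bool) → Prop
  | [], m => m α = true
  | (true, x) :: p, m => ∃ b, QSat (Function.update α x b) p m
  | (false, x) :: p, m => ∀ b, QSat (Function.update α x b) p m

/-- Satisfiability of a closed prenex formula. -/
def Sat (L : QPrefix) (m : Assignment → Bool) : Prop :=
  QSat (fun _ => false) L m

def pvars (L : QPrefix) : List Var := L.map Prod.snd

/-- The quantifier of a variable in the prefix (`true` = ∃). -/
def quantOf (L : QPrefix) (x : Var) : Bool :=
  ((L.find? (fun p => p.2 == x)).map Prod.fst).getD true

/-- Position of a variable in the linear prefix ordering. -/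
def varIdx (L : QPrefix) (x : Var) : Nat := (pvars L).idxOf x

def Clause.vars (C : Clause) : List Var := C.map Lit.var
def CNF.vars (φ : CNF) : List Var := φ.flatMap Clause.vars

/-- A closed PCNF: all matrix variables are quantified, and no variable twice. -/
def Closed (L : QPrefix) (φ : CNF) : Prop :=
  (∀ v ∈ CNF.vars φ, v ∈ pvars L) ∧ (pvars L).Nodup

def existLits (L : QPrefix) (C : List Lit) : List Lit :=
  C.filter (fun l => quantOf L l.var)

def univLits (L : QPrefix) (C : List Lit) : List Lit :=
  C.filter (fun l => !(quantOf L l.var))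

/-- Universal reduction of a clause: remove universal literals larger than all
existential literals of the clause. -/
def univRed (L : QPrefix) (C : Clause) : Clause :=
  C.filter (fun l =>
    !((!(quantOf L l.var)) &&
      (existLits L C).all (fun l' => decide (varIdx L l'.var < varIdx L l.var))))

/-- Existential reduction of a cube: remove existential literals larger than all
universal literals of the cube. -/
def exRed (L : QPrefix) (C : Cube) : Cube :=
  C.filter (fun l =>
    !((quantOf L l.var) &&
      (univLits L C).all (fun l' => decide (varIdx L l'.var < varIdx L l.var))))

def Lit.neg (l : Lit) : Lit := ⟨l.var, !l.pos⟩

/-- Tautological clause / contradictory cube: contains complementary literals. -/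
def Tauto (C : List Lit) : Prop := ∃ l ∈ C, Lit.neg l ∈ C

/-- Tentative Q-qResolvent of two clauses on existential pivot `p`. -/
def qResolvent (L : QPrefix) (C₁ C₂ : Clause) (p : Var) : Clause :=
  (univRed L C₁).filter (fun l => l ≠ ⟨p, true⟩) ++
  (univRed L C₂).filter (fun l => l ≠ ⟨p, false⟩)

/-- Q-resolution derivations from the clauses of `φ`. -/
inductive QDer (L : QPrefix) (φ : CNF) : Clause → Prop
  | ax {C} : C ∈ φ → QDer L φ C
  | ur {C} : QDer L φ C → QDer L φ (univRed L C)
  | res {C₁ C₂} {p : Var} :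
      QDer L φ C₁ → QDer L φ C₂ →
      ¬ Tauto C₁ → ¬ Tauto C₂ →
      quantOf L p = true → (⟨p, true⟩ : Lit) ∈ C₁ → (⟨p, false⟩ : Lit) ∈ C₂ →
      ¬ Tauto (qResolvent L C₁ C₂ p) →
      QDer L φ (qResolvent L C₁ C₂ p)

/-- The initial cube of a (total) model `α`: conjunction of the literals set by `α`,
in prefix order. -/
def initCube (L : QPrefix) (α : Assignment) : Cube :=
  L.map (fun p => ⟨p.2, α p.2⟩)

/-- Tentative cube qResolvent of two cubes on universal pivot `x`. -/
def cubeResolvent (L : QPrefix) (C₁ C₂ : Cube) (x : Var) : Cube :=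
  (exRed L C₁).filter (fun l => l ≠ ⟨x, true⟩) ++
  (exRed L C₂).filter (fun l => l ≠ ⟨x, false⟩)

/-- Cube derivations: model generation rule, existential reduction, cube resolution. -/
inductive CubeDer (L : QPrefix) (φ : CNF) : Cube → Prop
  | init (α : Assignment) : CNF.eval α φ = true → CubeDer L φ (initCube L α)
  | er {C} : CubeDer L φ C → CubeDer L φ (exRed L C)
  | res {C₁ C₂} {x : Var} :
      CubeDer L φ C₁ → CubeDer L φ C₂ →
      ¬ Tauto C₁ → ¬ Tauto C₂ →
      quantOf L x = false → (⟨x, true⟩ : Lit) ∈ C₁ → (⟨x, false⟩ : Lit) ∈ C₂ →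
      ¬ Tauto (cubeResolvent L C₁ C₂ x) →
      CubeDer L φ (cubeResolvent L C₁ C₂ x)

/-- Block-structured prefix: list of (quantifier, block of variables). -/
abbrev BPrefix := List (Bool × List Var)

def flatP (P : BPrefix) : QPrefix := P.flatMap (fun b => b.2.map (fun x => (b.1, x)))

def SatB (P : BPrefix) (m : Assignment → Bool) : Prop := Sat (flatP P) m

/-- Closed PCNF with block prefix. -/
def ClosedB (P : BPrefix) (φ : CNF) : Prop :=
  (∀ v ∈ CNF.vars φ, v ∈ pvars (flatP P)) ∧
  (∀ v ∈ pvars (flatP P), v ∈ CNF.vars φ) ∧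
  (pvars (flatP P)).Nodup



lemma QSat_congr (s : Var) : ∀ (L : QPrefix), s ∉ pvars L →
    ∀ (α α' : Assignment) (m m' : Assignment → Bool),
    (∀ x, x ≠ s → α x = α' x) →
    (∀ β β' : Assignment, (∀ x, x ≠ s → β x = β' x) → β s = α s → β' s = α' s →
      (m β = true ↔ m' β' = true)) →
    (QSat α L m ↔ QSat α' L m')
  | [], _, α, α', m, m', hαα, hm => hm α α' hαα rfl rfl
  | (q, x) :: L, hs, α, α', m, m', hαα, hm => by
    have hxs : x ≠ s := by
      intro h; exact hs (by simp [pvars, h])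
    have hs' : s ∉ pvars L := by
      intro h; exact hs (by simp [pvars] at h ⊢; tauto)
    have key : ∀ b, QSat (Function.update α x b) L m ↔
        QSat (Function.update α' x b) L m' := by
      intro b
      apply QSat_congr s L hs'
      · intro y hy
        by_cases hyx : y = x
        · subst hyx; simp
        · simp [Function.update_of_ne hyx, hαα y hy]
      · intro β β' hββ hβ hβ'
        apply hm β β' hββ
        · rwa [Function.update_of_ne (Ne.symm hxs)] at hβ
        · rwa [Function.update_of_ne (Ne.symm hxs)] at hβ'
    cases q
    · exact forall_congr' key
    · exact exists_congr key

lemma Clause_eval_agree {β β' : Assignment} :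
    ∀ {C : Clause}, (∀ x ∈ Clause.vars C, β x = β' x) →
      Clause.eval β C = Clause.eval β' C
  | [], _ => rfl
  | l :: C, h => by
    have h1 : β l.var = β' l.var := h l.var (by simp [Clause.vars])
    have h2 : Clause.eval β C = Clause.eval β' C :=
      Clause_eval_agree (fun x hx => h x (by simp [Clause.vars] at hx ⊢; tauto))
    simp only [Clause.eval, List.any_cons] at h2 ⊢
    rw [h2]; simp [Lit.eval, h1]

lemma CNF_eval_agree {β β' : Assignment} :
    ∀ {ψ : CNF}, (∀ x ∈ CNF.vars ψ, β x = β' x) →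
      CNF.eval β ψ = CNF.eval β' ψ
  | [], _ => rfl
  | C :: ψ, h => by
    have h1 : Clause.eval β C = Clause.eval β' C :=
      Clause_eval_agree (fun x hx => h x (by simp [CNF.vars, List.flatMap]; tauto))
    have h2 : CNF.eval β ψ = CNF.eval β' ψ :=
      CNF_eval_agree (fun x hx => h x (by simp [CNF.vars, List.flatMap] at hx ⊢; tauto))
    simp only [CNF.eval, List.all_cons] at h2 ⊢
    rw [h1, h2]

lemma eval_frame {s : Var} {β : Assignment} (φ F : CNF) :
    CNF.eval β (φ ++ F.map (fun C => (⟨s, true⟩ : Lit) :: C)) =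
      (CNF.eval β φ && (β s || CNF.eval β F)) := by
  induction F with
  | nil => simp [CNF.eval]
  | cons C F ih =>
    simp only [CNF.eval, List.map_cons, List.all_append, List.all_cons, List.all_map] at ih ⊢
    rw [show Clause.eval β (⟨s, true⟩ :: C) = (β s || Clause.eval β C) from by
      simp [Clause.eval, Lit.eval]]
    cases hβ : β s <;> cases ha : List.all φ (Clause.eval β) <;>
      cases hc : Clause.eval β C <;> simp_all

/-- selector-variable soundness. The fresh existential selector `s`
sits alone in the leftmost block and is added positively to every clause of the
frame `F`. Assigning `s` to false restores the frame clauses, assigning it to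
true disables them. -/
theorem selector_sound (s : Var) (P : BPrefix) (φ F : CNF)
    (hsφ : s ∉ CNF.vars φ) (hsF : s ∉ CNF.vars F) (hsP : s ∉ pvars (flatP P)) :
    (QSat (Function.update (fun _ => false) s false) (flatP P)
        (fun α => CNF.eval α (φ ++ F.map (fun C => (⟨s, true⟩ : Lit) :: C))) ↔
      SatB P (fun α => CNF.eval α (φ ++ F))) ∧
    (QSat (Function.update (fun _ => false) s true) (flatP P)
        (fun α => CNF.eval α (φ ++ F.map (fun C => (⟨s, true⟩ : Lit) :: C))) ↔
      SatB P (fun α => CNF.eval α φ)) := by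
  constructor
  · apply QSat_congr s (flatP P) hsP
    · intro x hx; simp [Function.update_of_ne hx]
    · intro β β' hββ hβ hβ'
      simp only [Function.update_self] at hβ
      have : β = β' := by
        funext x
        by_cases hx : x = s
        · subst hx; rw [hβ, hβ']
        · exact hββ x hx
      subst this
      rw [eval_frame, hβ]
      simp [CNF.eval, List.all_append]
  · apply QSat_congr s (flatP P) hsP
    · intro x hx; simp [Function.update_of_ne hx]
    · intro β β' hββ hβ hβ'
      simp only [Function.update_self] at hβ
      rw [eval_frame, hβ]
      simp only [Bool.true_or, Bool.and_true]
      rw [CNF_eval_agree (β' := β') (fun x hx => hββ x (fun h => hsφ (h ▸ hx)))]
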